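/- Let Λ be a finite acyclic simple graph (a forest). Let k ≥ 2, and suppose T₁, …, T_k, F₁, …, F_{k−1} are pairwise disjoint nonempty sets of vertices of Λ such that: (i) for each 1 ≤ i ≤ k−1, every vertex of F_i has a neighbor in T_i and a neighbor in T_{i+1}; (ii) for each 2 ≤ i ≤ k−1, every vertex of T_i has a neighbor in F_{i−1} and a neighbor in F_i; (iii) every vertex of T₁ has at least two neighbors in F₁; and (iv) every vertex of T_k has at least two neighbors in F_{k−1}. Then a contradiction follows; i.e., no such family of sets exists in a finite forest. -/

import Mathlib

open SimpleGraph

lemma aux_min_two_neighbors {V : Type} [Fintype V] {Λ : SimpleGraph V}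
    (hforest : Λ.IsAcyclic) (S : Set V) (hne : S.Nonempty)
    (hS : ∀ v ∈ S, ∃ u₁ u₂, u₁ ≠ u₂ ∧ u₁ ∈ S ∧ u₂ ∈ S ∧ Λ.Adj v u₁ ∧ Λ.Adj v u₂) :
    False := by
  classical
  obtain ⟨v₀, hv₀⟩ := hne
  have key : ∀ n : ℕ, ∃ (v w : V) (p : Λ.Walk v w),
      p.IsPath ∧ (∀ x ∈ p.support, x ∈ S) ∧ p.length = n := by
    intro n
    induction n with
    | zero => exact ⟨v₀, v₀, .nil, by simp, by simpa using hv₀, rfl⟩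
    | succ n ih =>
      obtain ⟨v, w, p, hp, hsup, hlen⟩ := ih
      obtain ⟨u₁, u₂, h12, hu₁S, hu₂S, ha₁, ha₂⟩ := hS v (hsup v p.start_mem_support)
      have hkey : u₁ ∉ p.support ∨ u₂ ∉ p.support := by
        by_contra hc
        push_neg at hc
        obtain ⟨h1, h2⟩ := hc
        have mk : ∀ (u : V) (h : u ∈ p.support) (ha : Λ.Adj v u),
            p.support.tail.head? = some u := by
          intro u h ha
          have hq : (⟨p.takeUntil u h, hp.takeUntil h⟩ : Λ.Path v u) = Path.singleton ha :=
            hforest.path_unique _ _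
          have hq' : p.takeUntil u h = Walk.cons ha Walk.nil := congrArg Subtype.val hq
          have hspec := p.take_spec h
          rw [hq'] at hspec
          have hsupp := congrArg Walk.support hspec
          rw [Walk.support_append] at hsupp
          simp only [Walk.support_cons, Walk.support_nil] at hsupp
          rw [← hsupp]
          rfl
        exact h12 (Option.some_injective _ ((mk u₁ h1 ha₁).symm.trans (mk u₂ h2 ha₂)))
      obtain ⟨u, huS, hau, hns⟩ : ∃ u, u ∈ S ∧ Λ.Adj v u ∧ u ∉ p.support := by
        rcases hkey with h | h
        exacts [⟨u₁, hu₁S, ha₁, h⟩, ⟨u₂, hu₂S, ha₂, h⟩]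
      refine ⟨u, w, .cons hau.symm p, ?_, ?_, by simp [hlen]⟩
      · rw [Walk.cons_isPath_iff]; exact ⟨hp, hns⟩
      · intro x hx
        rw [Walk.support_cons, List.mem_cons] at hx
        rcases hx with rfl | hx
        exacts [huS, hsup x hx]
  obtain ⟨v, w, p, hp, _, hlen⟩ := key (Fintype.card V)
  have := hp.length_lt
  omega


/-- In a finite forest `Λ` there is no family of pairwise disjoint nonempty vertex sets
`T 0, …, T (k+1)` and `F 0, …, F k` (playing the role of `T₁, …, T_k` and `F₁, …, F_{k-1}`
with `k ≥ 2`) such that: (i) every vertex of `F j` has a neighbor in `T j` and in `T (j+1)`;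
(ii) every vertex of an interior set `T (i+1)` (for `0 ≤ i < k`) has a neighbor in `F i`
and in `F (i+1)`; (iii) every vertex of `T 0` has at least two neighbors in `F 0`; and
(iv) every vertex of the last set `T (k+1)` has at least two neighbors in the last set `F k`. -/
theorem no_two_cycles_bounded_by_type_I {V : Type} [Fintype V]
    (Λ : SimpleGraph V) (hforest : Λ.IsAcyclic)
    (k : ℕ) (T : Fin (k + 2) → Set V) (F : Fin (k + 1) → Set V)
    (hTne : ∀ i, (T i).Nonempty) (hFne : ∀ j, (F j).Nonempty)
    (hTT : ∀ i j, i ≠ j → Disjoint (T i) (T j))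
    (hFF : ∀ i j, i ≠ j → Disjoint (F i) (F j))
    (hTF : ∀ i j, Disjoint (T i) (F j))
    (hi : ∀ j : Fin (k + 1), ∀ v ∈ F j,
      (∃ u ∈ T j.castSucc, Λ.Adj v u) ∧ (∃ u ∈ T j.succ, Λ.Adj v u))
    (hii : ∀ i : Fin k, ∀ v ∈ T i.succ.castSucc,
      (∃ u ∈ F i.castSucc, Λ.Adj v u) ∧ (∃ u ∈ F i.succ, Λ.Adj v u))
    (hiii : ∀ v ∈ T 0, ∃ u₁ u₂, u₁ ≠ u₂ ∧ u₁ ∈ F 0 ∧ u₂ ∈ F 0 ∧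
      Λ.Adj v u₁ ∧ Λ.Adj v u₂)
    (hiv : ∀ v ∈ T (Fin.last (k + 1)), ∃ u₁ u₂, u₁ ≠ u₂ ∧
      u₁ ∈ F (Fin.last k) ∧ u₂ ∈ F (Fin.last k) ∧ Λ.Adj v u₁ ∧ Λ.Adj v u₂) :
    False := by
  set S : Set V := (⋃ i, T i) ∪ (⋃ j, F j) with hSdef
  have hTS : ∀ i, T i ⊆ S := fun i x hx =>
    Set.mem_union_left _ (Set.mem_iUnion.2 ⟨i, hx⟩)
  have hFS : ∀ j, F j ⊆ S := fun j x hx =>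
    Set.mem_union_right _ (Set.mem_iUnion.2 ⟨j, hx⟩)
  refine aux_min_two_neighbors hforest S ((hTne 0).mono (hTS 0)) ?_
  intro v hv
  rcases hv with hv | hv
  · obtain ⟨i, hvT⟩ := Set.mem_iUnion.1 hv
    rcases eq_or_ne i 0 with rfl | hi0
    · obtain ⟨u₁, u₂, h12, hu₁, hu₂, ha₁, ha₂⟩ := hiii v hvT
      exact ⟨u₁, u₂, h12, hFS 0 hu₁, hFS 0 hu₂, ha₁, ha₂⟩
    rcases eq_or_ne i (Fin.last (k + 1)) with rfl | hil
    · obtain ⟨u₁, u₂, h12, hu₁, hu₂, ha₁, ha₂⟩ := hiv v hvT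
      exact ⟨u₁, u₂, h12, hFS _ hu₁, hFS _ hu₂, ha₁, ha₂⟩
    · have h1 : 1 ≤ i.val := by
        rcases Nat.eq_zero_or_pos i.val with h | h
        · exact absurd (Fin.ext h) hi0
        · exact h
      have h2 : i.val ≤ k := by
        have := i.isLt
        rcases Nat.lt_or_ge i.val (k + 1) with h | h
        · omega
        · exact absurd (Fin.ext (by omega : i.val = k + 1)) hil
      set i' : Fin k := ⟨i.val - 1, by omega⟩ with hi'
      have hieq : i = i'.succ.castSucc := by
        apply Fin.ext
        simp [hi']
        omega
      rw [hieq] at hvT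
      obtain ⟨⟨u₁, hu₁, ha₁⟩, ⟨u₂, hu₂, ha₂⟩⟩ := hii i' v hvT
      refine ⟨u₁, u₂, ?_, hFS _ hu₁, hFS _ hu₂, ha₁, ha₂⟩
      intro h
      subst h
      exact Set.disjoint_left.1
        (hFF i'.castSucc i'.succ (by simp [Fin.ext_iff])) hu₁ hu₂
  · obtain ⟨j, hvF⟩ := Set.mem_iUnion.1 hv
    obtain ⟨⟨u₁, hu₁, ha₁⟩, ⟨u₂, hu₂, ha₂⟩⟩ := hi j v hvF
    refine ⟨u₁, u₂, ?_, hTS _ hu₁, hTS _ hu₂, ha₁, ha₂⟩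
    intro h
    subst h
    exact Set.disjoint_left.1
      (hTT j.castSucc j.succ (by simp [Fin.ext_iff])) hu₁ hu₂
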